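/- Let P be a Markov transition kernel on X, R_0 ⊆ X measurable, and suppose P(x,·) ≥ ε Q(·) for all x in a set R ⊆ R_0, where ε > 0 and Q is a probability measure on X with Q(R_0) > 0. Define the restricted kernel P̃ on R_0 by P̃(x, B) = P(x, B) for B ⊆ R_0 with x ∉ B, and P̃(x,{x}) = 1 − P(x, R_0 \ {x}). Then P̃(x,·) ≥ ε Q(R_0) · Q(· | R_0) for all x ∈ R ∩ R_0, where Q(·|R_0) denotes Q conditioned on R_0. -/

import Mathlib

open MeasureTheory ProbabilityTheory

/-- If P(x,·) ≥ ε Q(·) for all x in R ⊆ R₀, with ε > 0 and Q(R₀) > 0,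
then the restricted kernel P̃ on R₀ (move by P but stay put when P would leave R₀,
i.e. P̃(x,B) = P(x, B ∩ R₀ \ {x}) + (1 − P(x, R₀ \ {x})) δ_x(B)) satisfies
P̃(x,·) ≥ ε Q(R₀) · Q(·|R₀) for all x ∈ R ∩ R₀. -/
theorem stmt_2 {X : Type*} [MeasurableSpace X] [MeasurableSingletonClass X]
    (P : Kernel X X) [IsMarkovKernel P]
    (Q : Measure X) [IsProbabilityMeasure Q]
    (R R₀ : Set X) (hR₀ : MeasurableSet R₀) (hRR₀ : R ⊆ R₀)
    (ε : ENNReal) (hε : 0 < ε)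
    (hminor : ∀ x ∈ R, ∀ B : Set X, MeasurableSet B → ε * Q B ≤ P x B)
    (hQR₀ : 0 < Q R₀)
    (Ptilde : X → Measure X)
    (hPtilde : ∀ x, Ptilde x =
      (P x).restrict (R₀ \ {x}) + (1 - P x (R₀ \ {x})) • Measure.dirac x) :
    ∀ x ∈ R ∩ R₀, ∀ B : Set X, MeasurableSet B →
      (ε * Q R₀) * (Q[|R₀]) B ≤ Ptilde x B := by
  intro x hx B hB
  obtain ⟨hxR, hxR₀⟩ := hx
  have hQne : Q R₀ ≠ 0 := hQR₀.ne'
  have hQtop : Q R₀ ≠ ⊤ := measure_ne_top Q R₀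
  have hDm : MeasurableSet (R₀ \ {x}) := hR₀.diff (measurableSet_singleton x)
  have hBDm : MeasurableSet (B ∩ (R₀ \ {x})) := hB.inter hDm
  -- rewrite LHS
  have hcond : (ε * Q R₀) * (Q[|R₀]) B = ε * Q (R₀ ∩ B) := by
    rw [ProbabilityTheory.cond_apply hR₀, mul_assoc, ← mul_assoc (Q R₀),
      ENNReal.mul_inv_cancel hQne hQtop, one_mul]
  rw [hcond, hPtilde]
  have hPt : Ptilde x B = P x (B ∩ (R₀ \ {x})) + (1 - P x (R₀ \ {x})) * (Measure.dirac x B) := by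
    rw [hPtilde, Measure.add_apply, Measure.restrict_apply hB, Measure.smul_apply,
      smul_eq_mul]
  rw [Measure.add_apply, Measure.restrict_apply hB, Measure.smul_apply, smul_eq_mul]
  -- key inequality: ε * Q {x} ≤ 1 - P x (R₀ \ {x})
  have key : ε * Q {x} ≤ 1 - P x (R₀ \ {x}) := by
    apply ENNReal.le_sub_of_add_le_right (measure_ne_top _ _)
    have h1 : ε * Q {x} ≤ P x {x} := hminor x hxR {x} (measurableSet_singleton x)
    have h2 : P x {x} + P x (R₀ \ {x}) = P x (insert x R₀) := by
      rw [← measure_union (by simp [Set.disjoint_left]) hDm]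
      congr 1
      ext y
      by_cases hy : y = x <;> simp [hy]
    calc ε * Q {x} + P x (R₀ \ {x}) ≤ P x {x} + P x (R₀ \ {x}) := add_le_add_left h1 _
      _ = P x (insert x R₀) := h2
      _ ≤ 1 := prob_le_one
  by_cases hxB : x ∈ B
  · have hsub : R₀ ∩ B ⊆ (B ∩ (R₀ \ {x})) ∪ {x} := by
      intro y ⟨hy₀, hyB⟩
      by_cases hy : y = x
      · exact Or.inr hy
      · exact Or.inl ⟨hyB, hy₀, hy⟩
    have : Q (R₀ ∩ B) ≤ Q (B ∩ (R₀ \ {x})) + Q {x} :=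
      (measure_mono hsub).trans (measure_union_le _ _)
    calc ε * Q (R₀ ∩ B) ≤ ε * (Q (B ∩ (R₀ \ {x})) + Q {x}) := by gcongr
      _ = ε * Q (B ∩ (R₀ \ {x})) + ε * Q {x} := mul_add _ _ _
      _ ≤ P x (B ∩ (R₀ \ {x})) + (1 - P x (R₀ \ {x})) * Measure.dirac x B := by
          rw [Measure.dirac_apply' x hB, Set.indicator_of_mem hxB, Pi.one_apply, mul_one]
          exact add_le_add (hminor x hxR _ hBDm) key
  · have hsub : R₀ ∩ B ⊆ B ∩ (R₀ \ {x}) := by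
      intro y ⟨hy₀, hyB⟩
      exact ⟨hyB, hy₀, fun h => hxB (h ▸ hyB)⟩
    calc ε * Q (R₀ ∩ B) ≤ ε * Q (B ∩ (R₀ \ {x})) := mul_le_mul_right (measure_mono hsub) ε
      _ ≤ P x (B ∩ (R₀ \ {x})) := hminor x hxR _ hBDm
      _ ≤ _ := le_self_add
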